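/- arXiv:1401.6522 — 3 statements merged into one kernel-verified Lean document; each statement's English description precedes it below -/
import Mathlib

section
/- Let X and M be real Hilbert spaces, let a : X × X → ℝ be a bounded bilinear form which is coercive, i.e. there is α > 0 with a(u,u) ≥ α‖u‖² for all u ∈ X, and let b : X × M → ℝ be a bounded bilinear form satisfying the inf-sup condition: there is μ > 0 such that for every p ∈ M, sup_{u ∈ X, u ≠ 0} b(u,p)/‖u‖ ≥ μ‖p‖. Then for every bounded linear functional f on X there exists a pair (u,p) ∈ X × M such that a(u,v) + b(v,p) = f(v) for all v ∈ X and b(u,q) = 0 for all q ∈ M; moreover there is a constant C > 0, depending only on α, μ and the operator norms of a and b, such that ‖u‖_X + ‖p‖_M ≤ C‖f‖_{X'}. -/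
open InnerProductSpace ContinuousLinearMap

set_option maxHeartbeats 1000000 in
/-- Babuska–Brezzi: existence and stability for a saddle point problem with a
coercive bounded bilinear form `a` and a bounded bilinear form `b` satisfying
the inf-sup condition. -/
theorem stmt0
    {X M : Type*} [NormedAddCommGroup X] [InnerProductSpace ℝ X] [CompleteSpace X]
    [NormedAddCommGroup M] [InnerProductSpace ℝ M] [CompleteSpace M]
    (a : X →L[ℝ] X →L[ℝ] ℝ) (b : X →L[ℝ] M →L[ℝ] ℝ)
    (α : ℝ) (hα : 0 < α) (hcoer : ∀ u : X, α * ‖u‖ ^ 2 ≤ a u u)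
    (μ : ℝ) (hμ : 0 < μ)
    (hinfsup : ∀ p : M, μ * ‖p‖ ≤ ⨆ u : {u : X // u ≠ 0}, b u.1 p / ‖u.1‖) :
    ∃ C > 0, ∀ f : X →L[ℝ] ℝ, ∃ (u : X) (p : M),
      (∀ v : X, a u v + b v p = f v) ∧ (∀ q : M, b u q = 0) ∧
      ‖u‖ + ‖p‖ ≤ C * ‖f‖ := by
  classical
  -- the operator T : M →L X with ⟪T p, v⟫ = b v p (Riesz representation of b ∙ p)
  set T : M →L[ℝ] X := LinearMap.mkContinuous
    { toFun := fun p => (InnerProductSpace.toDual ℝ X).symm (b.flip p)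
      map_add' := fun p q => by simp
      map_smul' := fun r p => by simp } ‖b.flip‖
    (fun p => by
      simp only [LinearMap.coe_mk, AddHom.coe_mk]
      rw [LinearIsometryEquiv.norm_map]
      exact (ContinuousLinearMap.le_opNorm _ p)) with hTdef
  have hT : ∀ (p : M) (v : X), ⟪T p, v⟫_ℝ = b v p := by
    intro p v
    rw [hTdef]
    simp only [LinearMap.mkContinuous_apply, LinearMap.coe_mk, AddHom.coe_mk]
    rw [InnerProductSpace.toDual_symm_apply]
    rfl
  -- lower bound for T from the inf-sup condition
  have hTlow : ∀ p : M, μ * ‖p‖ ≤ ‖T p‖ := by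
    intro p
    refine (hinfsup p).trans (Real.iSup_le ?_ (norm_nonneg _))
    rintro ⟨u, hu⟩
    have hupos : 0 < ‖u‖ := norm_pos_iff.mpr hu
    rw [div_le_iff₀ hupos, ← hT]
    exact (real_inner_le_norm _ _)
  -- T is antilipschitz, hence has closed range
  have hanti : AntilipschitzWith (Real.toNNReal μ⁻¹) T := by
    apply T.antilipschitz_of_bound
    intro p
    have := hTlow p
    rw [Real.coe_toNNReal μ⁻¹ (le_of_lt (inv_pos.mpr hμ)), ← div_eq_inv_mul,
      le_div_iff₀ hμ, mul_comm]
    exact this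
  have hclosed : IsClosed ((LinearMap.range (T : M →ₗ[ℝ] X) : Submodule ℝ X) : Set X) := by
    rw [LinearMap.coe_range]
    exact (hanti.isClosedEmbedding T.uniformContinuous).isClosed_range
  haveI : CompleteSpace (LinearMap.range (T : M →ₗ[ℝ] X)) := hclosed.completeSpace_coe
  -- the kernel V of b is a Hilbert space
  set V : Submodule ℝ X := LinearMap.ker (b : X →ₗ[ℝ] M →L[ℝ] ℝ) with hVdef
  have hmemV : ∀ v : X, v ∈ V ↔ ∀ q : M, b v q = 0 := by
    intro v
    rw [hVdef, LinearMap.mem_ker]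
    constructor
    · intro h q; have h' : b v = 0 := h; rw [h']; rfl
    · intro h; ext q; exact h q
  -- ker b = (range T)ᗮ
  have hker : V = (LinearMap.range (T : M →ₗ[ℝ] X))ᗮ := by
    ext v
    rw [hmemV, Submodule.mem_orthogonal]
    constructor
    · rintro hv x ⟨p, rfl⟩
      rw [ContinuousLinearMap.coe_coe, hT]
      exact hv p
    · intro hv q
      rw [← hT]
      exact hv (T q) ⟨q, rfl⟩
  have horth : Vᗮ = LinearMap.range (T : M →ₗ[ℝ] X) := by
    rw [hker, Submodule.orthogonal_orthogonal]
  have hVclosed : IsClosed (V : Set X) := ContinuousLinearMap.isClosed_ker b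
  haveI : CompleteSpace V := hVclosed.completeSpace_coe
  -- the restricted bilinear form on V, coercive
  set aV : V →L[ℝ] V →L[ℝ] ℝ := a.bilinearComp V.subtypeL V.subtypeL with haVdef
  have haVapp : ∀ v w : V, aV v w = a (v : X) (w : X) := by
    intro v w; rfl
  have hc : IsCoercive aV := by
    refine ⟨α, hα, fun v => ?_⟩
    rw [haVapp]
    calc α * ‖v‖ * ‖v‖ = α * ‖(v : X)‖ ^ 2 := by
          rw [mul_assoc, ← sq]; rfl
      _ ≤ a (v : X) (v : X) := hcoer _
  have hαinv : 0 < α⁻¹ := inv_pos.mpr hα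
  have hμinv : 0 < μ⁻¹ := inv_pos.mpr hμ
  have hanorm : (0 : ℝ) ≤ ‖a‖ := ContinuousLinearMap.opNorm_nonneg a
  have hpos2 : (0:ℝ) ≤ μ⁻¹ * (1 + ‖a‖ * α⁻¹) := mul_nonneg hμinv.le (by nlinarith)
  refine ⟨α⁻¹ + μ⁻¹ * (1 + ‖a‖ * α⁻¹), by linarith, fun f => ?_⟩
  -- Lax–Milgram on V
  obtain ⟨u₀, haV'⟩ : ∃ u₀ : V, ∀ v : V, a (u₀ : X) (v : X) = f (v : X) := by
    set E := hc.continuousLinearEquivOfBilin with hEdef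
    set F : V := (InnerProductSpace.toDual ℝ V).symm (f.comp V.subtypeL) with hFdef
    refine ⟨E.symm F, fun v => ?_⟩
    have h1 : ⟪E (E.symm F), v⟫_ℝ = aV (E.symm F) v :=
      hc.continuousLinearEquivOfBilin_apply _ v
    rw [E.apply_symm_apply, hFdef, InnerProductSpace.toDual_symm_apply] at h1
    rw [← haVapp, ← h1]; rfl
  set u : X := (u₀ : X) with hudef
  have haV : ∀ v : V, a u (v : X) = f (v : X) := haV'
  have huV : u ∈ V := u₀.2
  have hfnorm : (0 : ℝ) ≤ ‖f‖ := norm_nonneg f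
  -- energy bound for u
  have hu_bound : ‖u‖ ≤ α⁻¹ * ‖f‖ := by
    have h1 : α * ‖u‖ ^ 2 ≤ a u u := hcoer u
    have h2 : a u u = f u := haV u₀
    have h3 : f u ≤ ‖f‖ * ‖u‖ := (le_abs_self _).trans (f.le_opNorm u)
    rw [pow_two] at h1
    rcases eq_or_lt_of_le (norm_nonneg u) with h | h
    · rw [← h]; positivity
    · have h4 : α * ‖u‖ ≤ ‖f‖ := by
        have h5 : (α * ‖u‖) * ‖u‖ ≤ ‖f‖ * ‖u‖ := by nlinarith
        exact le_of_mul_le_mul_right h5 h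
      rw [← div_eq_inv_mul, le_div_iff₀ hα]
      linarith [h4, mul_comm ‖u‖ α ▸ h4]
  -- the functional g = f - a u vanishes on V
  set g : X →L[ℝ] ℝ := f - a u with hgdef
  set G : X := (InnerProductSpace.toDual ℝ X).symm g with hGdef
  have hGmem : G ∈ Vᗮ := by
    rw [Submodule.mem_orthogonal]
    intro w hw
    rw [real_inner_comm G w, hGdef, InnerProductSpace.toDual_symm_apply]
    have := haV ⟨w, hw⟩
    simp only [hgdef, ContinuousLinearMap.sub_apply]
    simpa using (sub_eq_zero.mpr this.symm)
  rw [horth] at hGmem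
  obtain ⟨p, hp⟩ := hGmem
  rw [ContinuousLinearMap.coe_coe] at hp
  refine ⟨u, p, ?_, ?_, ?_⟩
  · intro v
    have h1 : b v p = g v := by
      rw [← hT, hp, hGdef, InnerProductSpace.toDual_symm_apply]
    rw [h1, hgdef]
    simp
  · intro q
    exact (hmemV u).mp huV q
  · -- norm bound
    have hg_norm : ‖g‖ ≤ ‖f‖ + ‖a‖ * ‖u‖ := by
      refine (norm_sub_le _ _).trans ?_
      have := a.le_opNorm u
      linarith
    have hG_norm : ‖G‖ = ‖g‖ := by
      rw [hGdef]; exact (InnerProductSpace.toDual ℝ X).symm.norm_map g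
    have hp_bound : μ * ‖p‖ ≤ ‖f‖ + ‖a‖ * ‖u‖ := by
      calc μ * ‖p‖ ≤ ‖T p‖ := hTlow p
        _ = ‖G‖ := by rw [hp]
        _ = ‖g‖ := hG_norm
        _ ≤ ‖f‖ + ‖a‖ * ‖u‖ := hg_norm
    have hp2 : ‖p‖ ≤ μ⁻¹ * (1 + ‖a‖ * α⁻¹) * ‖f‖ := by
      rw [mul_comm] at hp_bound
      rw [← le_div_iff₀ hμ] at hp_bound
      rw [div_eq_mul_inv] at hp_bound
      refine hp_bound.trans ?_
      have h1 : ‖f‖ + ‖a‖ * ‖u‖ ≤ ‖f‖ + ‖a‖ * (α⁻¹ * ‖f‖) :=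
        add_le_add_right (mul_le_mul_of_nonneg_left hu_bound hanorm) ‖f‖
      calc (‖f‖ + ‖a‖ * ‖u‖) * μ⁻¹ ≤ (‖f‖ + ‖a‖ * (α⁻¹ * ‖f‖)) * μ⁻¹ :=
            mul_le_mul_of_nonneg_right h1 hμinv.le
        _ = μ⁻¹ * (1 + ‖a‖ * α⁻¹) * ‖f‖ := by ring
    have hsplit : (α⁻¹ + μ⁻¹ * (1 + ‖a‖ * α⁻¹)) * ‖f‖
        = α⁻¹ * ‖f‖ + μ⁻¹ * (1 + ‖a‖ * α⁻¹) * ‖f‖ := by ring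
    rw [hsplit]
    exact add_le_add hu_bound hp2
end

section
/- There exists a constant C > 0, independent of n, such that for every integer n ≥ 1 and every P : (ZMod n)² → ℝ with Σ_{i,j} P(i,j) = 0, there exist U, V : (ZMod n)² → ℝ satisfying (D₁U + D₂V)(i,j) = P(i,j) for all (i,j), and Σ_{i,j} [(D₁U)² + (D₂U)² + (D₁V)² + (D₂V)²](i,j) ≤ C Σ_{i,j} P(i,j)². -/
/-- Scaled forward difference in the first index on the periodic grid `(ZMod n)²`,
corresponding to mesh size `h = 1/n`. -/
def D1 (n : ℕ) (W : ZMod n → ZMod n → ℝ) (i j : ZMod n) : ℝ :=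
  (n : ℝ) * (W (i + 1) j - W i j)

/-- Scaled forward difference in the second index on the periodic grid `(ZMod n)²`,
corresponding to mesh size `h = 1/n`. -/
def D2 (n : ℕ) (W : ZMod n → ZMod n → ℝ) (i j : ZMod n) : ℝ :=
  (n : ℝ) * (W i (j + 1) - W i j)

/-- Backward difference in the first index. -/
def B1 (n : ℕ) (W : ZMod n → ZMod n → ℝ) (i j : ZMod n) : ℝ :=
  (n : ℝ) * (W i j - W (i - 1) j)

/-- Backward difference in the second index. -/
def B2 (n : ℕ) (W : ZMod n → ZMod n → ℝ) (i j : ZMod n) : ℝ :=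
  (n : ℝ) * (W i j - W i (j - 1))

section aux
variable (n : ℕ) [NeZero n]
set_option linter.unusedSectionVars false

lemma shift_sum (g : ZMod n → ℝ) (a : ZMod n) :
    ∑ i : ZMod n, g (i + a) = ∑ i : ZMod n, g i := by
  simpa using Equiv.sum_comp (Equiv.addRight a) g

lemma shift_sum' (g : ZMod n → ℝ) (a : ZMod n) :
    ∑ i : ZMod n, g (i - a) = ∑ i : ZMod n, g i := by
  simpa using Equiv.sum_comp (Equiv.subRight a) g

/-- product shift: key reindexing identity in the first variable. -/
lemma core1 (f g : ZMod n → ZMod n → ℝ) :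
    ∑ i : ZMod n, ∑ j : ZMod n, f i j * g (i + 1) j
      = ∑ i : ZMod n, ∑ j : ZMod n, f (i - 1) j * g i j := by
  have := shift_sum n (fun i => ∑ j : ZMod n, f (i - 1) j * g i j) 1
  simpa [add_sub_cancel_right] using this

lemma core2 (f g : ZMod n → ZMod n → ℝ) :
    ∑ i : ZMod n, ∑ j : ZMod n, f i j * g i (j + 1)
      = ∑ i : ZMod n, ∑ j : ZMod n, f i (j - 1) * g i j := by
  have : ∀ i : ZMod n, ∑ j : ZMod n, f i j * g i (j + 1)
      = ∑ j : ZMod n, f i (j - 1) * g i j := by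
    intro i
    have := shift_sum n (fun j => f i (j - 1) * g i j) 1
    simpa [add_sub_cancel_right] using this
  simp only [this]

/-- summation by parts in the first variable. -/
lemma sbp1 (f g : ZMod n → ZMod n → ℝ) :
    ∑ i : ZMod n, ∑ j : ZMod n, f i j * D1 n g i j
      = -∑ i : ZMod n, ∑ j : ZMod n, B1 n f i j * g i j := by
  have key := core1 n f g
  have e1 : ∀ i j : ZMod n, f i j * D1 n g i j
      = (n : ℝ) * (f i j * g (i + 1) j) - (n : ℝ) * (f i j * g i j) := by
    intro i j; simp only [D1]; ring
  have e2 : ∀ i j : ZMod n, B1 n f i j * g i j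
      = (n : ℝ) * (f i j * g i j) - (n : ℝ) * (f (i - 1) j * g i j) := by
    intro i j; simp only [B1]; ring
  simp only [e1, e2, Finset.sum_sub_distrib, ← Finset.mul_sum]
  rw [key]; ring

/-- summation by parts in the second variable. -/
lemma sbp2 (f g : ZMod n → ZMod n → ℝ) :
    ∑ i : ZMod n, ∑ j : ZMod n, f i j * D2 n g i j
      = -∑ i : ZMod n, ∑ j : ZMod n, B2 n f i j * g i j := by
  have key := core2 n f g
  have e1 : ∀ i j : ZMod n, f i j * D2 n g i j
      = (n : ℝ) * (f i j * g i (j + 1)) - (n : ℝ) * (f i j * g i j) := by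
    intro i j; simp only [D2]; ring
  have e2 : ∀ i j : ZMod n, B2 n f i j * g i j
      = (n : ℝ) * (f i j * g i j) - (n : ℝ) * (f i (j - 1) * g i j) := by
    intro i j; simp only [B2]; ring
  simp only [e1, e2, Finset.sum_sub_distrib, ← Finset.mul_sum]
  rw [key]; ring

lemma comm_B1_D2 (h : ZMod n → ZMod n → ℝ) (i j : ZMod n) :
    B1 n (fun i' j' => D2 n h i' j') i j = D2 n (fun i' j' => B1 n h i' j') i j := by
  simp only [B1, D2]; ring

lemma comm_B1_B2 (h : ZMod n → ZMod n → ℝ) (i j : ZMod n) :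
    B1 n (fun i' j' => B2 n h i' j') i j = B2 n (fun i' j' => B1 n h i' j') i j := by
  simp only [B1, B2]; ring

lemma B2_eq_D2_shift (h : ZMod n → ZMod n → ℝ) (i j : ZMod n) :
    B2 n h i j = D2 n h i (j - 1) := by
  simp only [B2, D2, sub_add_cancel]

lemma B1_eq_D1_shift (h : ZMod n → ZMod n → ℝ) (i j : ZMod n) :
    B1 n h i j = D1 n h (i - 1) j := by
  simp only [B1, D1, sub_add_cancel]

lemma sq_B2_eq_sq_D2 (h : ZMod n → ZMod n → ℝ) :
    ∑ i : ZMod n, ∑ j : ZMod n, (B2 n h i j) ^ 2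
      = ∑ i : ZMod n, ∑ j : ZMod n, (D2 n h i j) ^ 2 := by
  refine Finset.sum_congr rfl fun i _ => ?_
  calc ∑ j : ZMod n, (B2 n h i j) ^ 2
      = ∑ j : ZMod n, (fun j => (D2 n h i j) ^ 2) (j - 1) := by
        refine Finset.sum_congr rfl fun j _ => ?_
        simp only [B2_eq_D2_shift]
    _ = ∑ j : ZMod n, (D2 n h i j) ^ 2 := shift_sum' n (fun j => (D2 n h i j) ^ 2) 1

lemma sq_B1_eq_sq_D1 (h : ZMod n → ZMod n → ℝ) :
    ∑ i : ZMod n, ∑ j : ZMod n, (B1 n h i j) ^ 2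
      = ∑ i : ZMod n, ∑ j : ZMod n, (D1 n h i j) ^ 2 := by
  calc ∑ i : ZMod n, ∑ j : ZMod n, (B1 n h i j) ^ 2
      = ∑ i : ZMod n, (fun i => ∑ j : ZMod n, (D1 n h i j) ^ 2) (i - 1) := by
        refine Finset.sum_congr rfl fun i _ => Finset.sum_congr rfl fun j _ => ?_
        simp only [B1_eq_D1_shift]
    _ = ∑ i : ZMod n, ∑ j : ZMod n, (D1 n h i j) ^ 2 :=
        shift_sum' n (fun i => ∑ j : ZMod n, (D1 n h i j) ^ 2) 1

end aux

/-- The discrete Laplacian as a linear map. -/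
def Lap (n : ℕ) : (ZMod n → ZMod n → ℝ) →ₗ[ℝ] (ZMod n → ZMod n → ℝ) where
  toFun φ := fun i j => D1 n (B1 n φ) i j + D2 n (B2 n φ) i j
  map_add' := by
    intro φ ψ; funext i j
    simp only [D1, D2, B1, B2, Pi.add_apply]
    ring
  map_smul' := by
    intro c φ; funext i j
    simp only [D1, D2, B1, B2, Pi.smul_apply, smul_eq_mul, RingHom.id_apply]
    ring

/-- The total-sum functional. -/
def sumF (n : ℕ) [NeZero n] : (ZMod n → ZMod n → ℝ) →ₗ[ℝ] ℝ where
  toFun f := ∑ i : ZMod n, ∑ j : ZMod n, f i j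
  map_add' := by intro f g; simp [Finset.sum_add_distrib]
  map_smul' := by intro c f; simp [Finset.mul_sum]

lemma const_of_step (n : ℕ) [NeZero n] (g : ZMod n → ℝ) (h : ∀ i, g i = g (i - 1)) :
    ∀ i, g i = g 0 := by
  have key : ∀ k : ℕ, g (k : ZMod n) = g 0 := by
    intro k
    induction k with
    | zero => simp
    | succ m ih =>
      have := h ((m + 1 : ℕ) : ZMod n)
      have e : ((m + 1 : ℕ) : ZMod n) - 1 = (m : ZMod n) := by push_cast; ring
      rw [e] at this
      rw [this, ih]
  intro i
  obtain ⟨k, rfl⟩ := ZMod.natCast_zmod_surjective i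
  exact key k

lemma lap_surjective (n : ℕ) [NeZero n] (P : ZMod n → ZMod n → ℝ)
    (hP : ∑ i : ZMod n, ∑ j : ZMod n, P i j = 0) : ∃ φ, Lap n φ = P := by
  classical
  set one : ZMod n → ZMod n → ℝ := fun _ _ => 1 with hone
  have hone_ne : one ≠ 0 := by
    intro h
    have := congrFun (congrFun h 0) 0
    simp [hone] at this
  have hB1one : ∀ i j : ZMod n, B1 n one i j = 0 := by intro i j; simp [B1, hone]
  have hB2one : ∀ i j : ZMod n, B2 n one i j = 0 := by intro i j; simp [B2, hone]
  have hker : LinearMap.ker (Lap n) = Submodule.span ℝ {one} := by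
    apply le_antisymm
    · intro φ hφ
      have hφ0 : Lap n φ = 0 := hφ
      have h1 : ∑ i : ZMod n, ∑ j : ZMod n, φ i j * D1 n (B1 n φ) i j
          = -∑ i : ZMod n, ∑ j : ZMod n, (B1 n φ i j) ^ 2 := by
        rw [sbp1 n φ (B1 n φ)]
        congr 1
        exact Finset.sum_congr rfl fun i _ => Finset.sum_congr rfl fun j _ => (sq (B1 n φ i j)).symm
      have h2 : ∑ i : ZMod n, ∑ j : ZMod n, φ i j * D2 n (B2 n φ) i j
          = -∑ i : ZMod n, ∑ j : ZMod n, (B2 n φ i j) ^ 2 := by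
        rw [sbp2 n φ (B2 n φ)]
        congr 1
        exact Finset.sum_congr rfl fun i _ => Finset.sum_congr rfl fun j _ => (sq (B2 n φ i j)).symm
      have hz : ∑ i : ZMod n, ∑ j : ZMod n, (φ i j * D1 n (B1 n φ) i j
          + φ i j * D2 n (B2 n φ) i j) = 0 := by
        apply Finset.sum_eq_zero; intro i _
        apply Finset.sum_eq_zero; intro j _
        have hd : D1 n (B1 n φ) i j + D2 n (B2 n φ) i j = 0 := congrFun (congrFun hφ0 i) j
        linear_combination φ i j * hd
      rw [Finset.sum_congr rfl fun i _ => Finset.sum_add_distrib, Finset.sum_add_distrib,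
        h1, h2] at hz
      have p1 : (0:ℝ) ≤ ∑ i : ZMod n, ∑ j : ZMod n, (B1 n φ i j) ^ 2 :=
        Finset.sum_nonneg fun i _ => Finset.sum_nonneg fun j _ => sq_nonneg _
      have p2 : (0:ℝ) ≤ ∑ i : ZMod n, ∑ j : ZMod n, (B2 n φ i j) ^ 2 :=
        Finset.sum_nonneg fun i _ => Finset.sum_nonneg fun j _ => sq_nonneg _
      have hB1sq : ∑ i : ZMod n, ∑ j : ZMod n, (B1 n φ i j) ^ 2 = 0 := by linarith
      have hB2sq : ∑ i : ZMod n, ∑ j : ZMod n, (B2 n φ i j) ^ 2 = 0 := by linarith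
      have hB1 : ∀ i j : ZMod n, B1 n φ i j = 0 := by
        intro i j
        have h' := (Finset.sum_eq_zero_iff_of_nonneg
          (fun i _ => Finset.sum_nonneg fun j _ => sq_nonneg (B1 n φ i j))).mp hB1sq i
          (Finset.mem_univ i)
        have h'' := (Finset.sum_eq_zero_iff_of_nonneg
          (fun j _ => sq_nonneg (B1 n φ i j))).mp h' j (Finset.mem_univ j)
        exact pow_eq_zero_iff (by norm_num) |>.mp h''
      have hB2 : ∀ i j : ZMod n, B2 n φ i j = 0 := by
        intro i j
        have h' := (Finset.sum_eq_zero_iff_of_nonneg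
          (fun i _ => Finset.sum_nonneg fun j _ => sq_nonneg (B2 n φ i j))).mp hB2sq i
          (Finset.mem_univ i)
        have h'' := (Finset.sum_eq_zero_iff_of_nonneg
          (fun j _ => sq_nonneg (B2 n φ i j))).mp h' j (Finset.mem_univ j)
        exact pow_eq_zero_iff (by norm_num) |>.mp h''
      have hn : (n : ℝ) ≠ 0 := Nat.cast_ne_zero.mpr (NeZero.ne n)
      have step1 : ∀ i j : ZMod n, φ i j = φ (i - 1) j := by
        intro i j
        have := hB1 i j
        simp only [B1] at this
        rcases mul_eq_zero.mp this with h | h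
        · exact absurd h hn
        · linarith [sub_eq_zero.mp h]
      have step2 : ∀ i j : ZMod n, φ i j = φ i (j - 1) := by
        intro i j
        have := hB2 i j
        simp only [B2] at this
        rcases mul_eq_zero.mp this with h | h
        · exact absurd h hn
        · linarith [sub_eq_zero.mp h]
      have hconst : ∀ i j : ZMod n, φ i j = φ 0 0 := by
        intro i j
        have c1 : φ i j = φ i 0 := const_of_step n (fun j => φ i j) (fun j => step2 i j) j
        have c2 : φ i 0 = φ 0 0 := const_of_step n (fun i => φ i 0) (fun i => step1 i 0) i
        rw [c1, c2]
      rw [Submodule.mem_span_singleton]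
      refine ⟨φ 0 0, ?_⟩
      funext i j
      simp [hone, (hconst i j).symm]
    · rw [Submodule.span_le, Set.singleton_subset_iff]
      have : Lap n one = 0 := by
        funext i j
        simp [Lap, D1, D2, B1, B2, hone]
      exact this
  have hle : LinearMap.range (Lap n) ≤ LinearMap.ker (sumF n) := by
    rintro _ ⟨φ, rfl⟩
    have t1 : ∑ i : ZMod n, ∑ j : ZMod n, D1 n (B1 n φ) i j = 0 := by
      have h := sbp1 n one (B1 n φ)
      simp only [hone, one_mul] at h
      simp only [B1, sub_self, mul_zero, zero_mul, Finset.sum_const_zero, neg_zero] at h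
      simpa [hone] using h
    have t2 : ∑ i : ZMod n, ∑ j : ZMod n, D2 n (B2 n φ) i j = 0 := by
      have h := sbp2 n one (B2 n φ)
      simp only [hone, one_mul] at h
      simp only [B2, sub_self, mul_zero, zero_mul, Finset.sum_const_zero, neg_zero] at h
      simpa [hone] using h
    simp only [LinearMap.mem_ker, sumF, LinearMap.coe_mk, AddHom.coe_mk, Lap]
    rw [Finset.sum_congr rfl fun i _ => Finset.sum_add_distrib, Finset.sum_add_distrib, t1, t2]
    ring
  have hkdim : Module.finrank ℝ (LinearMap.ker (Lap n)) = 1 := by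
    rw [hker]; exact finrank_span_singleton hone_ne
  have hsurjF : Function.Surjective (sumF n) := by
    intro r
    refine ⟨fun _ _ => r / ((n : ℝ) * (n : ℝ)), ?_⟩
    have hn : (n : ℝ) ≠ 0 := Nat.cast_ne_zero.mpr (NeZero.ne n)
    simp only [sumF, LinearMap.coe_mk, AddHom.coe_mk, Finset.sum_const, Finset.card_univ,
      ZMod.card, nsmul_eq_mul]
    field_simp
  have hrk : Module.finrank ℝ (LinearMap.range (sumF n)) = 1 := by
    rw [LinearMap.range_eq_top.mpr hsurjF, finrank_top]
    exact Module.finrank_self ℝ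
  have rn1 := LinearMap.finrank_range_add_finrank_ker (Lap n)
  have rn2 := LinearMap.finrank_range_add_finrank_ker (sumF n)
  have heq : LinearMap.range (Lap n) = LinearMap.ker (sumF n) := by
    apply Submodule.eq_of_le_of_finrank_eq hle
    omega
  have hPmem : P ∈ LinearMap.ker (sumF n) := by
    simp only [LinearMap.mem_ker, sumF, LinearMap.coe_mk, AddHom.coe_mk]
    exact hP
  rw [← heq] at hPmem
  obtain ⟨φ, hφ⟩ := hPmem
  exact ⟨φ, hφ⟩

/-- Every mean-zero discrete pressure `P` on the periodic grid is the MAC discrete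
divergence of a discrete velocity field `(U, V)` whose discrete gradient is bounded by
`C` times the `l²` norm of `P`, with `C` independent of the mesh size. -/
theorem stmt8 :
    ∃ C > (0 : ℝ), ∀ (n : ℕ) [NeZero n], ∀ P : ZMod n → ZMod n → ℝ,
      (∑ i : ZMod n, ∑ j : ZMod n, P i j) = 0 →
      ∃ U V : ZMod n → ZMod n → ℝ,
        (∀ i j : ZMod n, D1 n U i j + D2 n V i j = P i j) ∧
        (∑ i : ZMod n, ∑ j : ZMod n,
            ((D1 n U i j) ^ 2 + (D2 n U i j) ^ 2 + (D1 n V i j) ^ 2 + (D2 n V i j) ^ 2))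
          ≤ C * ∑ i : ZMod n, ∑ j : ZMod n, (P i j) ^ 2 := by
  refine ⟨1, one_pos, ?_⟩
  intro n _ P hP
  obtain ⟨φ, hφ⟩ := lap_surjective n P hP
  set U : ZMod n → ZMod n → ℝ := fun i j => B1 n φ i j with hU
  set V : ZMod n → ZMod n → ℝ := fun i j => B2 n φ i j with hV
  have hdiv : ∀ i j : ZMod n, D1 n U i j + D2 n V i j = P i j := by
    intro i j
    have := congrFun (congrFun hφ i) j
    simpa [Lap, hU, hV, D1, D2] using this
  refine ⟨U, V, hdiv, ?_⟩
  rw [one_mul]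
  apply le_of_eq
  set X : ZMod n → ZMod n → ℝ := fun i j => B1 n (fun i' j' => B2 n φ i' j') i j with hX
  have hB2U : ∀ i j : ZMod n, B2 n U i j = X i j := by
    intro i j
    simp only [hX]
    rw [← comm_B1_B2 n φ i j]
  have cross : ∑ i : ZMod n, ∑ j : ZMod n, D1 n U i j * D2 n V i j
      = ∑ i : ZMod n, ∑ j : ZMod n, (X i j) ^ 2 := by
    have s1 : ∑ i : ZMod n, ∑ j : ZMod n, D1 n U i j * D2 n V i j
        = ∑ i : ZMod n, ∑ j : ZMod n, (fun i j => D2 n V i j) i j * D1 n U i j := by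
      refine Finset.sum_congr rfl fun i _ => Finset.sum_congr rfl fun j _ => mul_comm _ _
    rw [s1, sbp1 n (fun i j => D2 n V i j) U]
    have s2 : ∑ i : ZMod n, ∑ j : ZMod n, B1 n (fun i' j' => D2 n V i' j') i j * U i j
        = ∑ i : ZMod n, ∑ j : ZMod n, U i j * D2 n (fun i' j' => B1 n V i' j') i j := by
      refine Finset.sum_congr rfl fun i _ => Finset.sum_congr rfl fun j _ => ?_
      rw [comm_B1_D2 n V i j, mul_comm]
    rw [s2, sbp2 n U (fun i' j' => B1 n V i' j'), neg_neg]
    refine Finset.sum_congr rfl fun i _ => Finset.sum_congr rfl fun j _ => ?_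
    have e1 : B2 n U i j = X i j := hB2U i j
    have e2 : B1 n (fun i' j' => V i' j') i j = X i j := rfl
    rw [e1, e2, sq]
  have mix1 : ∑ i : ZMod n, ∑ j : ZMod n, (D2 n U i j) ^ 2
      = ∑ i : ZMod n, ∑ j : ZMod n, (X i j) ^ 2 := by
    rw [← sq_B2_eq_sq_D2 n U]
    refine Finset.sum_congr rfl fun i _ => Finset.sum_congr rfl fun j _ => ?_
    rw [hB2U i j]
  have mix2 : ∑ i : ZMod n, ∑ j : ZMod n, (D1 n V i j) ^ 2
      = ∑ i : ZMod n, ∑ j : ZMod n, (X i j) ^ 2 := by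
    rw [← sq_B1_eq_sq_D1 n V]
  have expand : ∑ i : ZMod n, ∑ j : ZMod n, (P i j) ^ 2
      = ∑ i : ZMod n, ∑ j : ZMod n,
        ((D1 n U i j) ^ 2 + 2 * (D1 n U i j * D2 n V i j) + (D2 n V i j) ^ 2) := by
    refine Finset.sum_congr rfl fun i _ => Finset.sum_congr rfl fun j _ => ?_
    rw [← hdiv i j]; ring
  rw [expand]
  simp only [Finset.sum_add_distrib, ← Finset.mul_sum]
  rw [cross, mix1, mix2]
  ring
end

section
/- There exists a constant C > 0, independent of n, such that for every integer n ≥ 1 and every E : (ZMod n)² → ℝ with Σ_{i,j} E(i,j) = 0, one has the discrete Poincaré inequality Σ_{i,j} E(i,j)² ≤ C Σ_{i,j} [(D₁E)² + (D₂E)²](i,j). -/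
open Finset


lemma telescope {n : ℕ} (f : ZMod n → ℝ) (k : ZMod n) (t : ℕ) :
    f (k + (t : ZMod n)) - f k
      = ∑ m ∈ range t, (f (k + (m : ZMod n) + 1) - f (k + (m : ZMod n))) := by
  induction t with
  | zero => simp
  | succ t ih =>
      rw [sum_range_succ, ← ih]
      have h : k + ((t + 1 : ℕ) : ZMod n) = k + (t : ZMod n) + 1 := by push_cast; ring
      rw [h]; ring

lemma diff_sq_le {n : ℕ} [NeZero n] (f : ZMod n → ℝ) (i k : ZMod n) :
    (f i - f k) ^ 2 ≤ (n : ℝ) * ∑ a : ZMod n, (f (a + 1) - f a) ^ 2 := by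
  set t := (i - k).val with ht
  have htn : t < n := ZMod.val_lt _
  have hik : k + (t : ZMod n) = i := by
    rw [ht, ZMod.natCast_val, ZMod.cast_id]; ring
  have h1 : (f i - f k) ^ 2
      = (∑ m ∈ range t, (f (k + (m : ZMod n) + 1) - f (k + (m : ZMod n)))) ^ 2 := by
    rw [← telescope f k t, hik]
  have h2 := sq_sum_le_card_mul_sum_sq (s := range t)
      (f := fun m => f (k + (m : ZMod n) + 1) - f (k + (m : ZMod n)))
  have hinj : ∀ a ∈ range t, ∀ b ∈ range t,
      k + (a : ZMod n) = k + (b : ZMod n) → a = b := by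
    intro a ha b hb hab
    simp only [mem_range] at ha hb
    have hc : (a : ZMod n) = (b : ZMod n) := add_left_cancel hab
    have := congrArg ZMod.val hc
    rwa [ZMod.val_cast_of_lt (lt_trans ha htn), ZMod.val_cast_of_lt (lt_trans hb htn)] at this
  have h3 : ∑ m ∈ range t, (f (k + (m : ZMod n) + 1) - f (k + (m : ZMod n))) ^ 2
      ≤ ∑ a : ZMod n, (f (a + 1) - f a) ^ 2 := by
    rw [← Finset.sum_image (g := fun m : ℕ => k + (m : ZMod n))
      (f := fun a => (f (a + 1) - f a) ^ 2) hinj]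
    exact Finset.sum_le_sum_of_subset_of_nonneg (subset_univ _) (fun _ _ _ => sq_nonneg _)
  have hsumnn : (0:ℝ) ≤ ∑ m ∈ range t, (f (k + (m : ZMod n) + 1) - f (k + (m : ZMod n))) ^ 2 :=
    sum_nonneg fun _ _ => sq_nonneg _
  calc (f i - f k) ^ 2
      ≤ (card (range t) : ℝ) * ∑ m ∈ range t, (f (k + (m : ZMod n) + 1) - f (k + (m : ZMod n))) ^ 2 := by
        rw [h1]; exact h2
    _ ≤ (n : ℝ) * ∑ m ∈ range t, (f (k + (m : ZMod n) + 1) - f (k + (m : ZMod n))) ^ 2 := by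
        apply mul_le_mul_of_nonneg_right _ hsumnn
        simp only [card_range]
        exact_mod_cast htn.le
    _ ≤ (n : ℝ) * ∑ a : ZMod n, (f (a + 1) - f a) ^ 2 :=
        mul_le_mul_of_nonneg_left h3 (by positivity)

/-- Discrete Poincaré inequality on the periodic grid `(ZMod n)²` with constant
independent of the mesh size. -/
theorem stmt15 :
    ∃ C > (0 : ℝ), ∀ (n : ℕ) [NeZero n], ∀ E : ZMod n → ZMod n → ℝ,
      (∑ i : ZMod n, ∑ j : ZMod n, E i j) = 0 →
      (∑ i : ZMod n, ∑ j : ZMod n, (E i j) ^ 2)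
        ≤ C * ∑ i : ZMod n, ∑ j : ZMod n, ((D1 n E i j) ^ 2 + (D2 n E i j) ^ 2) := by
  refine ⟨2, by norm_num, ?_⟩
  intro n _ E hmean
  set N : ℝ := (n : ℝ) with hNdef
  have hN : 0 < N := by
    have h0 : 0 < n := Nat.pos_of_ne_zero (NeZero.ne n)
    rw [hNdef]; exact_mod_cast h0
  set A : ZMod n → ℝ := fun j => ∑ a : ZMod n, (E (a + 1) j - E a j) ^ 2 with hA
  set B : ZMod n → ℝ := fun k => ∑ b : ZMod n, (E k (b + 1) - E k b) ^ 2 with hB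
  set S1 : ℝ := ∑ j : ZMod n, A j with hS1
  set S2 : ℝ := ∑ k : ZMod n, B k with hS2
  have hS1nn : 0 ≤ S1 := sum_nonneg fun j _ => sum_nonneg fun a _ => sq_nonneg _
  have hS2nn : 0 ≤ S2 := sum_nonneg fun k _ => sum_nonneg fun b _ => sq_nonneg _
  have hcard : (card (univ : Finset (ZMod n × ZMod n)) : ℝ) = N ^ 2 := by
    simp [Finset.card_univ, ZMod.card, sq, hNdef]
  -- mean value representation
  have hrep : ∀ i j : ZMod n, ∑ p : ZMod n × ZMod n, (E i j - E p.1 p.2) = N ^ 2 * E i j := by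
    intro i j
    have h0 : ∑ p : ZMod n × ZMod n, E p.1 p.2 = 0 := by
      rw [Fintype.sum_prod_type]; exact hmean
    rw [Finset.sum_sub_distrib, h0, Finset.sum_const, sub_zero, nsmul_eq_mul]
    rw [Finset.card_univ]
    simp [ZMod.card, sq, hNdef]
  -- pointwise bound
  have hpt : ∀ i j : ZMod n, N ^ 4 * E i j ^ 2 ≤ 2 * N ^ 5 * A j + 2 * N ^ 4 * S2 := by
    intro i j
    have hcs : (N ^ 2 * E i j) ^ 2
        ≤ N ^ 2 * ∑ p : ZMod n × ZMod n, (E i j - E p.1 p.2) ^ 2 := by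
      rw [← hrep i j, ← hcard]
      exact sq_sum_le_card_mul_sum_sq
    have hsplit : ∑ p : ZMod n × ZMod n, (E i j - E p.1 p.2) ^ 2
        ≤ ∑ p : ZMod n × ZMod n, (2 * N * A j + 2 * N * B p.1) := by
      apply Finset.sum_le_sum
      intro p _
      have h1 : (E i j - E p.1 j) ^ 2 ≤ N * A j :=
        diff_sq_le (fun x => E x j) i p.1
      have h2 : (E p.1 j - E p.1 p.2) ^ 2 ≤ N * B p.1 :=
        diff_sq_le (E p.1) j p.2
      nlinarith [sq_nonneg (E i j - E p.1 j + (E p.1 j - E p.1 p.2)),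
        sq_nonneg (E i j - E p.1 j - (E p.1 j - E p.1 p.2))]
    have e2 : ∑ k : ZMod n, N * (2 * N * B k) = 2 * N ^ 2 * S2 := by
      rw [hS2, Finset.mul_sum]
      exact Finset.sum_congr rfl fun k _ => by ring
    have hrhs : ∑ p : ZMod n × ZMod n, (2 * N * A j + 2 * N * B p.1)
        = 2 * N ^ 3 * A j + 2 * N ^ 2 * S2 := by
      rw [Fintype.sum_prod_type]
      have hin : ∀ k : ZMod n, ∑ _l : ZMod n, (2 * N * A j + 2 * N * B k)
          = N * (2 * N * A j) + N * (2 * N * B k) := by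
        intro k
        rw [Finset.sum_const, Finset.card_univ, ZMod.card, nsmul_eq_mul, ← hNdef]; ring
      rw [Finset.sum_congr rfl fun k _ => hin k, Finset.sum_add_distrib, e2,
        Finset.sum_const, Finset.card_univ, ZMod.card, nsmul_eq_mul, ← hNdef]
      ring
    have : (N ^ 2 * E i j) ^ 2 ≤ N ^ 2 * (2 * N ^ 3 * A j + 2 * N ^ 2 * S2) := by
      calc (N ^ 2 * E i j) ^ 2 ≤ N ^ 2 * ∑ p : ZMod n × ZMod n, (E i j - E p.1 p.2) ^ 2 := hcs
        _ ≤ N ^ 2 * (2 * N ^ 3 * A j + 2 * N ^ 2 * S2) := by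
            rw [← hrhs]; exact mul_le_mul_of_nonneg_left hsplit (by positivity)
    nlinarith [this]
  -- sum the pointwise bound
  have hsum : N ^ 4 * (∑ i : ZMod n, ∑ j : ZMod n, E i j ^ 2)
      ≤ 2 * N ^ 6 * (S1 + S2) := by
    have h := Finset.sum_le_sum (s := (univ : Finset (ZMod n)))
      (fun i _ => Finset.sum_le_sum (s := (univ : Finset (ZMod n)))
        (fun j _ => hpt i j))
    calc N ^ 4 * (∑ i : ZMod n, ∑ j : ZMod n, E i j ^ 2)
        = ∑ i : ZMod n, ∑ j : ZMod n, N ^ 4 * E i j ^ 2 := by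
          rw [Finset.mul_sum]; congr 1; ext i; rw [Finset.mul_sum]
      _ ≤ ∑ i : ZMod n, ∑ j : ZMod n, (2 * N ^ 5 * A j + 2 * N ^ 4 * S2) := h
      _ = 2 * N ^ 6 * (S1 + S2) := by
          simp [Finset.sum_add_distrib, ← Finset.mul_sum, Finset.sum_const,
            Finset.card_univ, ZMod.card, nsmul_eq_mul, hS1]
          ring
  have hmain : (∑ i : ZMod n, ∑ j : ZMod n, E i j ^ 2) ≤ 2 * N ^ 2 * (S1 + S2) := by
    have h4 : (0:ℝ) < N ^ 4 := by positivity
    have := hsum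
    nlinarith [this]
  -- rewrite RHS
  have c1 : ∑ i : ZMod n, ∑ j : ZMod n, N ^ 2 * (E (i + 1) j - E i j) ^ 2
      = N ^ 2 * S1 := by
    rw [hS1]
    simp only [hA, ← Finset.mul_sum]
    congr 1
    exact Finset.sum_comm
  have c2 : ∑ i : ZMod n, ∑ j : ZMod n, N ^ 2 * (E i (j + 1) - E i j) ^ 2
      = N ^ 2 * S2 := by
    rw [hS2]
    simp only [hB, ← Finset.mul_sum]
  have hD : ∑ i : ZMod n, ∑ j : ZMod n, ((D1 n E i j) ^ 2 + (D2 n E i j) ^ 2)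
      = N ^ 2 * (S1 + S2) := by
    have : ∀ i j : ZMod n, (D1 n E i j) ^ 2 + (D2 n E i j) ^ 2
        = N ^ 2 * (E (i + 1) j - E i j) ^ 2 + N ^ 2 * (E i (j + 1) - E i j) ^ 2 := by
      intro i j
      simp only [D1, D2, hNdef]; ring
    calc ∑ i : ZMod n, ∑ j : ZMod n, ((D1 n E i j) ^ 2 + (D2 n E i j) ^ 2)
        = ∑ i : ZMod n, ∑ j : ZMod n,
            (N ^ 2 * (E (i + 1) j - E i j) ^ 2 + N ^ 2 * (E i (j + 1) - E i j) ^ 2) := by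
          exact Finset.sum_congr rfl fun i _ => Finset.sum_congr rfl fun j _ => this i j
      _ = N ^ 2 * S1 + N ^ 2 * S2 := by
          simp only [Finset.sum_add_distrib]; rw [c1, c2]
      _ = N ^ 2 * (S1 + S2) := by ring
  rw [hD]
  calc (∑ i : ZMod n, ∑ j : ZMod n, E i j ^ 2) ≤ 2 * N ^ 2 * (S1 + S2) := hmain
    _ = 2 * (N ^ 2 * (S1 + S2)) := by ring
end
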